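/- Let n ≥ 2 and let V be a smooth (n−1)-vector field on an open set U ⊆ ℝⁿ with V_{x₀} ≠ 0 at a point x₀ ∈ U. Suppose that on some neighbourhood of x₀ there exists a closed nowhere-vanishing smooth 1-form ζ such that for every y one has {w ∈ (ℝⁿ)* : i_wV_y = 0} = ℝ·ζ_y. Then V has conformal constant coefficients on a neighbourhood of x₀. -/

import Mathlib

/-- Constant coefficients for a `q`-vector field (see context). -/
def HasConstantCoefficientsVecAt (n q : ℕ) (U : Set (Fin n → ℝ))
    (V : (Fin n → ℝ) → (((Fin n → ℝ) →L[ℝ] ℝ) [×q]→L[ℝ] ℝ)) (x : Fin n → ℝ) : Prop :=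
  ∃ W : Set (Fin n → ℝ), IsOpen W ∧ x ∈ W ∧ W ⊆ U ∧
    ∃ u : (Fin n → ℝ) → (Fin n → ℝ),
      ContDiffOn ℝ (⊤ : ℕ∞) u W ∧ Set.InjOn u W ∧ IsOpen (u '' W) ∧
      (∀ y ∈ W, Function.Bijective (fderiv ℝ u y)) ∧
      ∃ c : ((Fin n → ℝ) →L[ℝ] ℝ) [×q]→L[ℝ] ℝ,
        ∀ y ∈ W, ∀ w : Fin q → ((Fin n → ℝ) →L[ℝ] ℝ),
          c w = V y (fun i => (w i).comp (fderiv ℝ u y))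

/-- Conformal constant coefficients for a `q`-vector field: `V = f·V′` near `x` for
some smooth function `f` and some `q`-vector field `V′` with constant coefficients
on a neighbourhood of `x`. -/
def HasConformalConstantCoefficientsVecAt (n q : ℕ) (U : Set (Fin n → ℝ))
    (V : (Fin n → ℝ) → (((Fin n → ℝ) →L[ℝ] ℝ) [×q]→L[ℝ] ℝ)) (x : Fin n → ℝ) : Prop :=
  ∃ W : Set (Fin n → ℝ), IsOpen W ∧ x ∈ W ∧ W ⊆ U ∧
    ∃ f : (Fin n → ℝ) → ℝ, ContDiffOn ℝ (⊤ : ℕ∞) f W ∧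
      ∃ V' : (Fin n → ℝ) → (((Fin n → ℝ) →L[ℝ] ℝ) [×q]→L[ℝ] ℝ),
        HasConstantCoefficientsVecAt n q Set.univ V' x ∧
        ∀ y ∈ W, V y = f y • V' y



open Metric intervalIntegral

variable {E : Type*} [NormedAddCommGroup E] [NormedSpace ℝ E] [FiniteDimensional ℝ E]

theorem poincare_ball {W : Set E} (hW : IsOpen W)
    {ζ : E → (E →L[ℝ] ℝ)} (hζ : ContDiffOn ℝ (⊤ : ℕ∞) ζ W)
    (hsymm : ∀ y ∈ W, ∀ a b : E, fderiv ℝ ζ y a b = fderiv ℝ ζ y b a)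
    (x₀ : E) {r : ℝ} (hr : 0 < r) (hball : closedBall x₀ r ⊆ W) :
    ∃ g : E → ℝ, ∀ x ∈ ball x₀ r, HasFDerivAt g (ζ x) x := by
  classical
  have hζc : ContinuousOn ζ W := hζ.continuousOn
  have hζd : ∀ y ∈ W, DifferentiableAt ℝ ζ y := fun y hy =>
    (hζ.contDiffAt (hW.mem_nhds hy)).differentiableAt (by simp)
  have hdc : ContinuousOn (fderiv ℝ ζ) W := hζ.continuousOn_fderiv_of_isOpen hW (mod_cast le_top)
  obtain ⟨C₁, hC₁⟩ := (isCompact_closedBall x₀ r).exists_bound_of_continuousOn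
    (hζc.mono hball)
  obtain ⟨C₂, hC₂⟩ := (isCompact_closedBall x₀ r).exists_bound_of_continuousOn (f := fderiv ℝ ζ)
    (hdc.mono hball)
  set p : ℝ → E → E := fun t x => x₀ + t • (x - x₀) with hp
  have hpmem : ∀ t ∈ Set.Icc (0:ℝ) 1, ∀ x ∈ closedBall x₀ r, p t x ∈ closedBall x₀ r := by
    intro t ht x hx
    simp only [mem_closedBall, dist_eq_norm, hp] at hx ⊢
    have : x₀ + t • (x - x₀) - x₀ = t • (x - x₀) := by abel
    rw [this, norm_smul]
    calc ‖t‖ * ‖x - x₀‖ ≤ 1 * ‖x - x₀‖ := by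
          apply mul_le_mul_of_nonneg_right _ (norm_nonneg _)
          rw [Real.norm_eq_abs, abs_le]; constructor <;> linarith [ht.1, ht.2]
      _ = ‖x - x₀‖ := one_mul _
      _ ≤ r := hx
  have hpc : ∀ x : E, ContinuousOn (fun t => p t x) (Set.Icc (0:ℝ) 1) := by
    intro x
    exact (continuous_const.add (continuous_id.smul continuous_const)).continuousOn
  set F : E → ℝ → ℝ := fun x t => ζ (p t x) (x - x₀) with hF
  set F' : E → ℝ → E →L[ℝ] ℝ := fun x t =>
    ζ (p t x) + t • (fderiv ℝ ζ (p t x) (x - x₀)) with hF'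
  refine ⟨fun x => ∫ t in (0:ℝ)..1, F x t, fun x hx => ?_⟩
  have hxc : x ∈ closedBall x₀ r := ball_subset_closedBall hx
  set ε : ℝ := r - dist x x₀ with hε
  have hε0 : 0 < ε := by simp only [hε]; rw [mem_ball] at hx; linarith
  have hsub : ball x ε ⊆ closedBall x₀ r := by
    intro z hz
    rw [mem_ball] at hz
    rw [mem_closedBall]
    calc dist z x₀ ≤ dist z x + dist x x₀ := dist_triangle _ _ _
      _ ≤ r := by simp only [hε] at hz; linarith
  -- continuity of t ↦ F' z t on Icc 0 1, for z in closed ball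
  have hF'cont : ∀ z ∈ closedBall x₀ r, ContinuousOn (fun t => F' z t) (Set.Icc (0:ℝ) 1) := by
    intro z hz
    have h1 : ContinuousOn (fun t => ζ (p t z)) (Set.Icc (0:ℝ) 1) :=
      (hζc.mono hball).comp (hpc z) (fun t ht => hpmem t ht z hz)
    have h2 : ContinuousOn (fun t => fderiv ℝ ζ (p t z)) (Set.Icc (0:ℝ) 1) :=
      (hdc.mono hball).comp (hpc z) (fun t ht => hpmem t ht z hz)
    exact h1.add (continuousOn_id.smul (h2.clm_apply continuousOn_const))
  have hFcont : ∀ z ∈ closedBall x₀ r, ContinuousOn (fun t => F z t) (Set.Icc (0:ℝ) 1) := by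
    intro z hz
    have h1 : ContinuousOn (fun t => ζ (p t z)) (Set.Icc (0:ℝ) 1) :=
      (hζc.mono hball).comp (hpc z) (fun t ht => hpmem t ht z hz)
    exact h1.clm_apply continuousOn_const
  have hIsub : Set.uIoc (0:ℝ) 1 ⊆ Set.Icc (0:ℝ) 1 := by
    rw [Set.uIoc_of_le (zero_le_one)]
    exact Set.Ioc_subset_Icc_self
  -- the derivative in x
  have hdiff : ∀ t ∈ Set.Icc (0:ℝ) 1, ∀ z ∈ ball x ε,
      HasFDerivAt (fun y => F y t) (F' z t) z := by
    intro t ht z hz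
    have hzc : z ∈ closedBall x₀ r := hsub hz
    have hpz : p t z ∈ W := hball (hpmem t ht z hzc)
    have hq : HasFDerivAt (fun y : E => p t y) (t • (ContinuousLinearMap.id ℝ E)) z := by
      have : HasFDerivAt (fun y : E => y - x₀) (ContinuousLinearMap.id ℝ E) z :=
        (hasFDerivAt_id z).sub_const x₀
      exact (this.const_smul t).const_add x₀
    have hc : HasFDerivAt (fun y => ζ (p t y))
        ((fderiv ℝ ζ (p t z)).comp (t • (ContinuousLinearMap.id ℝ E))) z :=
      ((hζd _ hpz).hasFDerivAt).comp z hq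
    have hu : HasFDerivAt (fun y : E => y - x₀) (ContinuousLinearMap.id ℝ E) z :=
      (hasFDerivAt_id z).sub_const x₀
    have := hc.clm_apply hu
    refine this.congr_fderiv ?_
    symm
    ext v
    simp only [hF', ContinuousLinearMap.add_apply, ContinuousLinearMap.coe_comp',
      Function.comp_apply, ContinuousLinearMap.coe_id', ContinuousLinearMap.smul_apply,
      ContinuousLinearMap.flip_apply, ContinuousLinearMap.coe_smul', Pi.smul_apply, id_eq]
    rw [hsymm _ hpz, map_smul, ContinuousLinearMap.smul_apply]
  -- main diff-under-integral
  have key : HasFDerivAt (fun y => ∫ t in (0:ℝ)..1, F y t)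
      (∫ t in (0:ℝ)..1, F' x t) x := by
    apply intervalIntegral.hasFDerivAt_integral_of_dominated_of_fderiv_le (hs := ball_mem_nhds x hε0)
      (bound := fun _ => C₁ + C₂ * (2 * r))
    · filter_upwards [ball_mem_nhds x hε0] with z hz
      exact ((hFcont z (hsub hz)).mono hIsub).aestronglyMeasurable measurableSet_uIoc
    · exact (hFcont x hxc).intervalIntegrable_of_Icc zero_le_one
    · exact ((hF'cont x hxc).mono hIsub).aestronglyMeasurable measurableSet_uIoc
    · filter_upwards with t ht z hz
      have htI : t ∈ Set.Icc (0:ℝ) 1 := hIsub ht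
      have hzc : z ∈ closedBall x₀ r := hsub hz
      have hpz : p t z ∈ closedBall x₀ r := hpmem t htI z hzc
      have hz0 : ‖z - x₀‖ ≤ 2 * r := by
        rw [mem_closedBall, dist_eq_norm] at hzc
        linarith [hzc]
      calc ‖F' z t‖ ≤ ‖ζ (p t z)‖ + ‖t • (fderiv ℝ ζ (p t z) (z - x₀))‖ := norm_add_le _ _
        _ ≤ C₁ + 1 * (C₂ * (2 * r)) := by
            apply add_le_add (hC₁ _ hpz)
            apply (ContinuousLinearMap.opNorm_smul_le _ _).trans
            apply mul_le_mul
            · rw [Real.norm_eq_abs, abs_le]; constructor <;> linarith [htI.1, htI.2]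
            · calc ‖fderiv ℝ ζ (p t z) (z - x₀)‖
                  ≤ ‖fderiv ℝ ζ (p t z)‖ * ‖z - x₀‖ := ContinuousLinearMap.le_opNorm _ _
                _ ≤ C₂ * (2 * r) := by
                    apply mul_le_mul (hC₂ _ hpz) hz0 (norm_nonneg _)
                    exact le_trans (norm_nonneg _) (hC₂ _ hpz)
            · exact norm_nonneg _
            · linarith
        _ = C₁ + C₂ * (2 * r) := by ring
    · exact intervalIntegrable_const
    · filter_upwards with t ht z hz
      exact hdiff t (hIsub ht) z hz
  -- compute the integral via FTC
  have hFTC : (∫ t in (0:ℝ)..1, F' x t) = ζ x := by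
    have hderiv : ∀ t ∈ Set.uIcc (0:ℝ) 1,
        HasDerivAt (fun t => t • ζ (p t x)) (F' x t) t := by
      intro t ht
      rw [Set.uIcc_of_le zero_le_one] at ht
      have hpx : p t x ∈ W := hball (hpmem t ht x hxc)
      have hq : HasDerivAt (fun t : ℝ => p t x) (x - x₀) t := by
        have : HasDerivAt (fun t : ℝ => t • (x - x₀)) (x - x₀) t := by
          simpa using (hasDerivAt_id t).smul_const (x - x₀)
        simpa [hp] using this.const_add x₀
      have hc : HasDerivAt (fun t => ζ (p t x)) (fderiv ℝ ζ (p t x) (x - x₀)) t :=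
        ((hζd _ hpx).hasFDerivAt).comp_hasDerivAt t hq
      have := (hasDerivAt_id t).smul hc
      simp [hF', add_comm] at this ⊢
      exact this
    have hint : IntervalIntegrable (fun t => F' x t) MeasureTheory.volume 0 1 :=
      (hF'cont x hxc).intervalIntegrable_of_Icc zero_le_one
    have hFTC' := intervalIntegral.integral_eq_sub_of_hasDerivAt hderiv hint
    rw [hFTC']
    simp [hp]
  rw [hFTC] at key
  exact key


open ContinuousLinearMap

/-- The coordinate projections form a basis of the continuous dual of `Fin n → ℝ`. -/
noncomputable def dualPiBasis (n : ℕ) : Module.Basis (Fin n) ℝ ((Fin n → ℝ) →L[ℝ] ℝ) :=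
  Module.Basis.ofEquivFun
    { toFun := fun f => fun j => f (Pi.single j 1)
      map_add' := fun f g => by ext j; simp
      map_smul' := fun c f => by ext j; simp
      invFun := fun v => ∑ j, v j • ContinuousLinearMap.proj j
      left_inv := fun f => by
        ext x
        simp only [ContinuousLinearMap.coe_sum', Finset.sum_apply,
          ContinuousLinearMap.coe_smul', Pi.smul_apply, ContinuousLinearMap.proj_apply,
          smul_eq_mul]
        have hx : x = ∑ j, Pi.single j (x j) := by
          ext i; simp [Pi.single_apply]
        conv_rhs => rw [hx, map_sum]
        congr 1
        ext j
        have : Pi.single j (x j) = x j • (Pi.single j 1 : Fin n → ℝ) := by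
          ext i; simp only [Pi.smul_apply, Pi.single_apply, smul_eq_mul]
          split <;> simp
        rw [this, map_smul, smul_eq_mul, mul_comm]
      right_inv := fun v => by
        funext j
        simp [Pi.single_apply, Finset.sum_ite_eq'] }

theorem dualPiBasis_apply (n : ℕ) (j : Fin n) :
    dualPiBasis n j = ContinuousLinearMap.proj j := by
  ext x
  simp [dualPiBasis, Module.Basis.ofEquivFun, Pi.single_apply, Finset.sum_ite_eq']

section KeyRep

variable {m : ℕ}

local notation "E" => (Fin (m + 2) → ℝ)
local notation "Dl" => ((Fin (m + 2) → ℝ) →L[ℝ] ℝ)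

/-- The alternating map associated to `Vy`. -/
noncomputable def altOf (Vy : Dl [×(m + 1)]→L[ℝ] ℝ)
    (halt : ∀ w : Fin (m + 1) → Dl, ∀ i j, i ≠ j → w i = w j → Vy w = 0) :
    Dl [⋀^Fin (m + 1)]→ₗ[ℝ] ℝ :=
  { Vy.toMultilinearMap with
    map_eq_zero_of_eq' := fun v i j heq hne => halt v i j hne heq }

theorem altOf_apply (Vy : Dl [×(m + 1)]→L[ℝ] ℝ) (halt) (w : Fin (m + 1) → Dl) :
    altOf Vy halt w = Vy w := rfl

/-- If some entry has vanishing contraction, the value vanishes. -/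
theorem vanish_of_entry (Vy : Dl [×(m + 1)]→L[ℝ] ℝ)
    (halt : ∀ w : Fin (m + 1) → Dl, ∀ i j, i ≠ j → w i = w j → Vy w = 0)
    (v : Fin (m + 1) → Dl) (i₀ : Fin (m + 1))
    (hv : ∀ ws : Fin m → Dl, Vy (Fin.cons (v i₀) ws) = 0) : Vy v = 0 := by
  classical
  set σ : Equiv.Perm (Fin (m + 1)) := Equiv.swap 0 i₀ with hσ
  have h0 : (v ∘ σ) 0 = v i₀ := by simp [hσ, Equiv.swap_apply_left]
  have hz : Vy (v ∘ σ) = 0 := by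
    have : (v ∘ σ) = Fin.cons ((v ∘ σ) 0) (Fin.tail (v ∘ σ)) := (Fin.cons_self_tail _).symm
    rw [this, h0]
    exact hv _
  have hperm := (altOf Vy halt).map_perm v σ
  rw [altOf_apply, altOf_apply, hz] at hperm
  rcases Int.units_eq_one_or (Equiv.Perm.sign σ) with h1 | h1 <;>
    rw [h1] at hperm <;> simpa using hperm.symm

/-- Key representation: a pushforward of `Vy` by a map whose rows are the projections
except for row `k`, which is `ζy`, is a multiple of the determinant (n-1)-vector. -/
theorem key_rep (Vy : Dl [×(m + 1)]→L[ℝ] ℝ)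
    (halt : ∀ w : Fin (m + 1) → Dl, ∀ i j, i ≠ j → w i = w j → Vy w = 0)
    (ζy : Dl) (hvan : ∀ ws : Fin m → Dl, Vy (Fin.cons ζy ws) = 0)
    (k : Fin (m + 2)) (Dy : E →L[ℝ] E)
    (hrow : ∀ j : Fin (m + 2), (ContinuousLinearMap.proj j).comp Dy =
      if j = k then ζy else ContinuousLinearMap.proj j) :
    ∀ w : Fin (m + 1) → Dl,
      Vy (fun i => (w i).comp Dy) =
        Vy (fun i => ContinuousLinearMap.proj (k.succAbove i)) *
          Matrix.det (Matrix.of fun i j => (w i) (Pi.single (k.succAbove j) (1:ℝ))) := by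
  classical
  set h : ℝ := Vy (fun i => ContinuousLinearMap.proj (k.succAbove i)) with hh
  -- precomposition linear map
  set Pl : Dl →ₗ[ℝ] Dl :=
    { toFun := fun w => w.comp Dy
      map_add' := fun a b => by ext x; simp
      map_smul' := fun c a => by ext x; simp } with hPl
  set rowL : Dl →ₗ[ℝ] (Fin (m + 1) → ℝ) :=
    { toFun := fun w => fun j => w (Pi.single (k.succAbove j) 1)
      map_add' := fun a b => by funext j; simp
      map_smul' := fun c a => by funext j; simp } with hrowL
  set LHSmap : MultilinearMap ℝ (fun _ : Fin (m + 1) => Dl) ℝ :=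
    Vy.toMultilinearMap.compLinearMap (fun _ => Pl) with hL
  set RHSmap : MultilinearMap ℝ (fun _ : Fin (m + 1) => Dl) ℝ :=
    h • ((Matrix.detRowAlternating :
        (Fin (m + 1) → ℝ) [⋀^Fin (m + 1)]→ₗ[ℝ] ℝ).toMultilinearMap.compLinearMap
      (fun _ => rowL)) with hR
  have main : LHSmap = RHSmap := by
    apply Module.Basis.ext_multilinear (fun _ => dualPiBasis (m + 2))
    intro σ
    simp only [hL, hR, MultilinearMap.compLinearMap_apply, MultilinearMap.smul_apply,
      ContinuousMultilinearMap.coe_coe, AlternatingMap.coe_multilinearMap,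
      dualPiBasis_apply, smul_eq_mul]
    -- identify the entries
    have hent : ∀ i, Pl (ContinuousLinearMap.proj (σ i)) =
        if σ i = k then ζy else ContinuousLinearMap.proj (σ i) := fun i => hrow (σ i)
    set P : Fin (m + 1) → Dl := fun i => if σ i = k then ζy else ContinuousLinearMap.proj (σ i)
      with hP
    have hM : (fun i => rowL (ContinuousLinearMap.proj (σ i))) =
        fun i => fun j => (Pi.single (k.succAbove j) (1:ℝ) : Fin (m+2) → ℝ) (σ i) := by
      funext i j; simp [hrowL]
    rw [show (fun i => Pl (ContinuousLinearMap.proj (σ i))) = P from funext hent, hM]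
    by_cases hinj : Function.Injective σ
    · by_cases hk : ∃ i₀, σ i₀ = k
      · obtain ⟨i₀, hi₀⟩ := hk
        have hPz : Vy P = 0 := by
          apply vanish_of_entry Vy halt P i₀
          have : P i₀ = ζy := by simp [hP, hi₀]
          rw [this]; exact hvan
        have hdet : Matrix.detRowAlternating
            (fun i => fun j => (Pi.single (k.succAbove j) (1:ℝ) : Fin (m+2) → ℝ) (σ i)) = 0 := by
          show Matrix.det _ = 0
          apply Matrix.det_eq_zero_of_row_eq_zero i₀
          intro j
          show (Pi.single (k.succAbove j) (1:ℝ) : Fin (m+2) → ℝ) (σ i₀) = 0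
          rw [hi₀, Pi.single_apply, if_neg (Fin.succAbove_ne k j).symm]
        rw [hPz, hdet, mul_zero]
      · push_neg at hk
        -- σ avoids k : get a permutation
        have hex : ∀ i, ∃ j, k.succAbove j = σ i := fun i => Fin.exists_succAbove_eq (hk i)
        choose τ0 hτ0 using hex
        have hτinj : Function.Injective τ0 := by
          intro a b hab
          apply hinj
          rw [← hτ0 a, ← hτ0 b, hab]
        set τ : Equiv.Perm (Fin (m + 1)) :=
          Equiv.ofBijective τ0 (Finite.injective_iff_bijective.mp hτinj) with hτ
        have hPw : P = (fun i => ContinuousLinearMap.proj (k.succAbove i)) ∘ τ := by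
          funext i
          simp only [hP, Function.comp_apply, if_neg (hk i)]
          rw [show (τ i : Fin (m+1)) = τ0 i from rfl, hτ0]
        have hperm := (altOf Vy halt).map_perm
          (fun i => ContinuousLinearMap.proj (k.succAbove i)) τ
        rw [altOf_apply, altOf_apply] at hperm
        rw [hPw, hperm, ← hh]
        have hmat : (fun i => fun j => (Pi.single (k.succAbove j) (1:ℝ) : Fin (m+2) → ℝ) (σ i)) =
            τ.permMatrix ℝ := by
          funext i j
          simp only [Equiv.Perm.permMatrix, PEquiv.toMatrix_apply, Equiv.toPEquiv_apply,
            Option.mem_def, Option.some.injEq, Pi.single_apply]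
          rw [← hτ0 i]
          by_cases hij : τ0 i = j
          · rw [if_pos (by rw [hij]), if_pos (by rw [show (τ i : Fin (m+1)) = τ0 i from rfl, hij])]
          · rw [if_neg (fun hcon => hij (Fin.succAbove_right_injective hcon)),
              if_neg (by rw [show (τ i : Fin (m+1)) = τ0 i from rfl]; exact fun hcon => hij hcon)]
        rw [hmat]
        show _ • _ = _ * Matrix.det _
        rw [Matrix.det_permutation]
        rcases Int.units_eq_one_or (Equiv.Perm.sign τ) with h1 | h1 <;> rw [h1] <;> simp
    · -- not injective
      rw [Function.not_injective_iff] at hinj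
      obtain ⟨a, b, hab, hne⟩ := hinj
      have hPz : Vy P = 0 := by
        apply halt P a b hne
        simp only [hP, hab]
      have hdet : Matrix.detRowAlternating
          (fun i => fun j => (Pi.single (k.succAbove j) (1:ℝ) : Fin (m+2) → ℝ) (σ i)) = 0 := by
        show Matrix.det _ = 0
        apply Matrix.det_zero_of_row_eq hne
        show (fun j => (Pi.single (k.succAbove j) (1:ℝ) : Fin (m+2) → ℝ) (σ a)) =
            (fun j => (Pi.single (k.succAbove j) (1:ℝ) : Fin (m+2) → ℝ) (σ b))
        rw [hab]
      rw [hPz, hdet, mul_zero]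
  intro w
  have h2 := DFunLike.congr_fun main w
  rw [hL, hR] at h2
  simp only [MultilinearMap.compLinearMap_apply, MultilinearMap.smul_apply,
    ContinuousMultilinearMap.coe_coe, smul_eq_mul] at h2
  convert h2 using 3 with i
  all_goals rfl

end KeyRep

/-- Example 1.21: with `n = m + 2 ≥ 2`, let `V` be a smooth
`(n−1)`-vector field with `V_{x₀} ≠ 0`. If on some neighbourhood of `x₀` there is a
closed nowhere-vanishing smooth `1`-form `ζ` with `{w : i_w V_y = 0} = ℝ·ζ_y` for
every `y`, then `V` has conformal constant coefficients near `x₀`. -/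
theorem codimOneVector_conformalConstantCoefficients (m : ℕ)
    (U : Set (Fin (m + 2) → ℝ)) (hU : IsOpen U)
    (V : (Fin (m + 2) → ℝ) → (((Fin (m + 2) → ℝ) →L[ℝ] ℝ) [×(m + 1)]→L[ℝ] ℝ))
    (hV : ContDiffOn ℝ (⊤ : ℕ∞) V U)
    (halt : ∀ y ∈ U, ∀ w : Fin (m + 1) → ((Fin (m + 2) → ℝ) →L[ℝ] ℝ), ∀ i j,
      i ≠ j → w i = w j → V y w = 0)
    (x₀ : Fin (m + 2) → ℝ) (hx₀ : x₀ ∈ U) (hx0 : V x₀ ≠ 0)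
    (hP : ∃ W : Set (Fin (m + 2) → ℝ), IsOpen W ∧ x₀ ∈ W ∧ W ⊆ U ∧
      ∃ ζ : (Fin (m + 2) → ℝ) → ((Fin (m + 2) → ℝ) →L[ℝ] ℝ),
        ContDiffOn ℝ (⊤ : ℕ∞) ζ W ∧
        (∀ y ∈ W, ζ y ≠ 0) ∧
        (∀ y ∈ W, ∀ a b : Fin (m + 2) → ℝ,
          fderiv ℝ ζ y a b = fderiv ℝ ζ y b a) ∧
        (∀ y ∈ W, ∀ w : (Fin (m + 2) → ℝ) →L[ℝ] ℝ,
          (∀ ws : Fin m → ((Fin (m + 2) → ℝ) →L[ℝ] ℝ), V y (Fin.cons w ws) = 0) ↔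
            (∃ t : ℝ, w = t • ζ y))) :
    HasConformalConstantCoefficientsVecAt (m + 2) (m + 1) U V x₀ := by
  classical
  obtain ⟨W₀, hW₀o, hxW₀, hW₀U, ζ, hζs, hζne, hsymm, hker⟩ := hP
  -- choose a coordinate `k` where `ζ x₀` does not vanish
  obtain ⟨k, hk⟩ : ∃ k : Fin (m + 2), ζ x₀ (Pi.single k 1) ≠ 0 := by
    by_contra hcon
    push_neg at hcon
    apply hζne x₀ hxW₀
    ext v
    have hv : v = ∑ j, v j • (Pi.single j 1 : Fin (m + 2) → ℝ) := by
      ext i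
      simp [Pi.single_apply, Finset.sum_ite_eq']
    rw [ContinuousLinearMap.zero_apply, hv, map_sum]
    simp [hcon]
  -- the model derivative field
  set D : (Fin (m + 2) → ℝ) → ((Fin (m + 2) → ℝ) →L[ℝ] (Fin (m + 2) → ℝ)) := fun y =>
    ContinuousLinearMap.pi (fun i => if i = k then ζ y else ContinuousLinearMap.proj i) with hD
  have hrowD : ∀ y, ∀ j : Fin (m + 2), (ContinuousLinearMap.proj j).comp (D y) =
      if j = k then ζ y else ContinuousLinearMap.proj j := by
    intro y j
    ext v
    by_cases hjk : j = k <;>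
      simp [hD, ContinuousLinearMap.pi_apply, hjk]
  -- the coefficient function
  set h : (Fin (m + 2) → ℝ) → ℝ :=
    fun y => V y (fun i => ContinuousLinearMap.proj (k.succAbove i)) with hhdef
  have hhsm : ContDiffOn ℝ (⊤ : ℕ∞) h U := by
    have hA : ContDiff ℝ (⊤ : ℕ∞) (ContinuousMultilinearMap.apply ℝ
        (fun _ : Fin (m + 1) => (Fin (m + 2) → ℝ) →L[ℝ] ℝ) ℝ
        (fun i => ContinuousLinearMap.proj (k.succAbove i))) :=
      ContinuousLinearMap.contDiff _
    exact hA.comp_contDiffOn hV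
  -- vanishing of the contraction with ζ
  have hvan : ∀ y ∈ W₀, ∀ ws : Fin m → ((Fin (m + 2) → ℝ) →L[ℝ] ℝ),
      V y (Fin.cons (ζ y) ws) = 0 := by
    intro y hy
    exact (hker y hy (ζ y)).mpr ⟨1, (one_smul _ _).symm⟩
  -- the key representation
  have hkey : ∀ y, y ∈ U → y ∈ W₀ → ∀ w : Fin (m + 1) → ((Fin (m + 2) → ℝ) →L[ℝ] ℝ),
      V y (fun i => (w i).comp (D y)) =
        h y * Matrix.det (Matrix.of fun i j => (w i) (Pi.single (k.succAbove j) (1:ℝ))) := by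
    intro y hyU hyW w
    exact key_rep (V y) (fun w i j hne heq => halt y hyU w i j hne heq) (ζ y)
      (hvan y hyW) k (D y) (hrowD y) w
  -- bijectivity of the model derivative
  have hbij : ∀ y, ζ y (Pi.single k 1) ≠ 0 → Function.Bijective (D y) := by
    intro y hy
    have hinj : Function.Injective (D y) := by
      intro a b hab
      rw [← sub_eq_zero] at hab ⊢
      rw [← map_sub] at hab
      set v := a - b with hv
      have hvi : ∀ i, i ≠ k → v i = 0 := by
        intro i hik
        have := congrFun hab i
        simpa [hD, ContinuousLinearMap.pi_apply, hik] using this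
      have hvk : ζ y v = 0 := by
        have := congrFun hab k
        simpa [hD, ContinuousLinearMap.pi_apply] using this
      have hvs : v = Pi.single k (v k) := by
        ext i
        by_cases hik : i = k
        · subst hik; simp
        · simp [Pi.single_apply, hik, hvi i hik]
      have : Pi.single k (v k) = v k • (Pi.single k 1 : Fin (m + 2) → ℝ) := by
        ext i
        simp only [Pi.smul_apply, Pi.single_apply, smul_eq_mul]
        split <;> simp
      rw [hvs, this, map_smul, smul_eq_mul, mul_eq_zero] at hvk
      have hvk0 : v k = 0 := by
        rcases hvk with h' | h'
        · exact h'
        · exact absurd h' hy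
      rw [hvs, hvk0]
      simp
    exact ⟨hinj, LinearMap.injective_iff_surjective.mp hinj⟩
  -- h x₀ ≠ 0
  have hbij₀ : Function.Bijective (D x₀) := hbij x₀ hk
  set e₀ : (Fin (m + 2) → ℝ) ≃L[ℝ] (Fin (m + 2) → ℝ) :=
    (LinearEquiv.ofBijective ((D x₀) : (Fin (m + 2) → ℝ) →ₗ[ℝ] (Fin (m + 2) → ℝ))
      hbij₀).toContinuousLinearEquiv with he₀
  have he₀app : ∀ v, e₀ v = D x₀ v := fun v => rfl
  have hh0 : h x₀ ≠ 0 := by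
    intro h0
    apply hx0
    ext w
    have hkx := hkey x₀ hx₀ hxW₀ (fun i => (w i).comp (e₀.symm : _ →L[ℝ] _))
    rw [h0, zero_mul] at hkx
    have hcomp : (fun i => ((w i).comp (e₀.symm : _ →L[ℝ] _)).comp (D x₀)) = w := by
      funext i
      ext v
      simp only [ContinuousLinearMap.coe_comp', Function.comp_apply,
        ContinuousLinearEquiv.coe_coe]
      rw [← he₀app v, ContinuousLinearEquiv.symm_apply_apply]
    rw [hcomp] at hkx
    simpa using hkx
  -- the open set T of good points
  have hζco : ContinuousOn (fun y => ζ y (Pi.single k 1)) W₀ :=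
    hζs.continuousOn.clm_apply continuousOn_const
  set T₁ : Set (Fin (m + 2) → ℝ) :=
    (U ∩ W₀) ∩ ((fun y => ζ y (Pi.single k 1)) ⁻¹' {(0:ℝ)}ᶜ) with hT₁
  have hT₁o : IsOpen T₁ :=
    (hζco.mono Set.inter_subset_right).isOpen_inter_preimage (hU.inter hW₀o)
      isOpen_compl_singleton
  set T : Set (Fin (m + 2) → ℝ) := T₁ ∩ (h ⁻¹' {(0:ℝ)}ᶜ) with hT
  have hTo : IsOpen T :=
    ((hhsm.continuousOn).mono (fun y hy => hy.1.1)).isOpen_inter_preimage hT₁o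
      isOpen_compl_singleton
  have hxT : x₀ ∈ T := ⟨⟨⟨hx₀, hxW₀⟩, hk⟩, hh0⟩
  obtain ⟨ε, hε0, hεT⟩ := Metric.isOpen_iff.mp hTo x₀ hxT
  set r : ℝ := ε / 2 with hr
  have hr0 : 0 < r := by positivity
  have hcbT : Metric.closedBall x₀ r ⊆ T := by
    intro y hy
    apply hεT
    rw [Metric.mem_closedBall] at hy
    rw [Metric.mem_ball]
    calc dist y x₀ ≤ ε / 2 := hy
      _ < ε := by linarith
  have hcbW₀ : Metric.closedBall x₀ r ⊆ W₀ := fun y hy => (hcbT hy).1.1.2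
  have hbT : Metric.ball x₀ r ⊆ T := fun y hy => hcbT (Metric.ball_subset_closedBall hy)
  -- Poincaré lemma: a potential for ζ
  obtain ⟨g, hg⟩ := poincare_ball hW₀o hζs hsymm x₀ hr0 hcbW₀
  -- the chart u
  set u : (Fin (m + 2) → ℝ) → (Fin (m + 2) → ℝ) :=
    fun y => fun i => if i = k then g y else y i with hu
  have hud : ∀ y ∈ Metric.ball x₀ r, HasFDerivAt u (D y) y := by
    intro y hy
    apply hasFDerivAt_pi.mpr
    intro i
    by_cases hik : i = k
    · subst hik
      simpa using hg y hy
    · simpa [hik] using hasFDerivAt_apply i y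
  have hfd : ∀ y ∈ Metric.ball x₀ r, fderiv ℝ u y = D y := fun y hy => (hud y hy).fderiv
  -- u is smooth on the ball
  have husm : ContDiffOn ℝ (⊤ : ℕ∞) u (Metric.ball x₀ r) := by
    apply contDiffOn_pi.mpr
    intro i
    by_cases hik : i = k
    · subst hik
      have : (fun y : Fin (m + 2) → ℝ => u y i) = g := by
        funext y; simp [hu]
      rw [this]
      rw [contDiffOn_infty_iff_fderiv_of_isOpen Metric.isOpen_ball]
      constructor
      · exact fun y hy => (hg y hy).differentiableAt.differentiableWithinAt
      · exact (hζs.mono (Metric.ball_subset_closedBall.trans hcbW₀)).congr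
          (fun y hy => (hg y hy).fderiv)
    · have : (fun y : Fin (m + 2) → ℝ => u y i) = fun y => y i := by
        funext y; simp [hu, hik]
      rw [this]
      exact (contDiff_apply ℝ _ i).contDiffOn
  -- inverse function theorem
  have hx₀b : x₀ ∈ Metric.ball x₀ r := Metric.mem_ball_self hr0
  have hstrict : HasStrictFDerivAt u ((e₀ : (Fin (m + 2) → ℝ) →L[ℝ] (Fin (m + 2) → ℝ))) x₀ := by
    have hc : ContDiffAt ℝ (⊤ : ℕ∞) u x₀ := husm.contDiffAt (Metric.isOpen_ball.mem_nhds hx₀b)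
    have := hc.hasStrictFDerivAt (by simp)
    rw [hfd x₀ hx₀b] at this
    exact this
  set Φ := hstrict.toOpenPartialHomeomorph u with hΦ
  have hΦcoe : (Φ : (Fin (m + 2) → ℝ) → (Fin (m + 2) → ℝ)) = u :=
    hstrict.toOpenPartialHomeomorph_coe
  have hx₀Φ : x₀ ∈ Φ.source := hstrict.mem_toOpenPartialHomeomorph_source
  -- the final neighbourhood
  set Wf : Set (Fin (m + 2) → ℝ) := Metric.ball x₀ r ∩ Φ.source with hWf
  have hWfo : IsOpen Wf := Metric.isOpen_ball.inter Φ.open_source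
  have hxWf : x₀ ∈ Wf := ⟨hx₀b, hx₀Φ⟩
  have hWfT : Wf ⊆ T := fun y hy => hbT hy.1
  have hWfU : Wf ⊆ U := fun y hy => (hWfT hy).1.1.1
  refine ⟨Wf, hWfo, hxWf, hWfU, h, hhsm.mono hWfU, fun y => (h y)⁻¹ • V y, ?_, ?_⟩
  · -- constant coefficients of V' on Wf
    refine ⟨Wf, hWfo, hxWf, Set.subset_univ _, u, husm.mono Set.inter_subset_left, ?_, ?_, ?_, ?_⟩
    · have := Φ.injOn
      rw [hΦcoe] at this
      exact this.mono Set.inter_subset_right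
    · have : IsOpen (Φ '' Wf) := Φ.isOpen_image_of_subset_source hWfo Set.inter_subset_right
      rwa [hΦcoe] at this
    · intro y hy
      rw [hfd y hy.1]
      exact hbij y (hWfT hy).1.2
    · refine ⟨(h x₀)⁻¹ • (V x₀).compContinuousLinearMap
        (fun _ => (ContinuousLinearMap.compL ℝ (Fin (m + 2) → ℝ) (Fin (m + 2) → ℝ) ℝ).flip
          (fderiv ℝ u x₀)), ?_⟩
      intro y hy w
      have hyU : y ∈ U := hWfU hy
      have hyW₀ : y ∈ W₀ := (hWfT hy).1.1.2
      have hyh : h y ≠ 0 := (hWfT hy).2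
      simp only [ContinuousMultilinearMap.smul_apply,
        ContinuousMultilinearMap.compContinuousLinearMap_apply, smul_eq_mul]
      rw [hfd y hy.1, hfd x₀ hx₀b]
      have h1 := hkey x₀ hx₀ hxW₀ w
      have h2 := hkey y hyU hyW₀ w
      have hflip : ∀ i, ((ContinuousLinearMap.compL ℝ (Fin (m + 2) → ℝ) (Fin (m + 2) → ℝ) ℝ).flip
          (D x₀)) (w i) = (w i).comp (D x₀) := fun i => rfl
      simp only [hflip]
      rw [h1, h2]
      field_simp
  · -- V = h • V' on Wf
    intro y hy
    have hyh : h y ≠ 0 := (hWfT hy).2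
    exact (smul_inv_smul₀ hyh (V y)).symm
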